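/- arXiv:1303.1889 — 3 statements merged into one kernel-verified Lean document; each statement's English description precedes it below -/
import Mathlib

section
/- The number of monomials $\xi_1^{i_1}\xi_2^{i_2}\cdots\xi_n^{i_n}$ with nonnegative integer exponents satisfying $i_1+\cdots+i_k \le k$ for all $k \le n$ and $i_1+\cdots+i_n = n$ equals the $n$-th Catalan number $C(n) = \frac{1}{n+1}\binom{2n}{n}$. -/
open List DyckStep

def Ftup : List ℕ → List DyckStep
  | [] => []
  | a :: l => U :: (List.replicate a D ++ Ftup l)

lemma Ftup_append (l₁ l₂ : List ℕ) : Ftup (l₁ ++ l₂) = Ftup l₁ ++ Ftup l₂ := by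
  induction l₁ with
  | nil => rfl
  | cons a l ih => simp [Ftup, ih]

@[simp] lemma count_U_Ftup (l : List ℕ) : (Ftup l).count U = l.length := by
  induction l with
  | nil => rfl
  | cons a l ih => simp [Ftup, ih, List.count_replicate]

@[simp] lemma count_D_Ftup (l : List ℕ) : (Ftup l).count D = l.sum := by
  induction l with
  | nil => rfl
  | cons a l ih => simp [Ftup, ih, List.count_replicate]

@[simp] lemma length_Ftup (l : List ℕ) : (Ftup l).length = l.length + l.sum := by
  induction l with
  | nil => rfl
  | cons a l ih => simp [Ftup, ih]; omega

lemma Ftup_inj : Function.Injective Ftup := by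
  intro l l' h
  induction l generalizing l' with
  | nil => cases l' with
    | nil => rfl
    | cons a l' => simp [Ftup] at h
  | cons a l ih =>
    cases l' with
    | nil => simp [Ftup] at h
    | cons a' l' =>
      simp only [Ftup, List.cons.injEq, true_and] at h
      have ha : a = a' := by
        have h1 := congrArg (fun t : List DyckStep => (t.takeWhile (· = D)).length) h
        have hD : ∀ (b : ℕ) (m : List ℕ),
            ((List.replicate b D ++ Ftup m).takeWhile (· = D)).length = b := by
          intro b m
          rw [List.takeWhile_append]
          cases m with
          | nil => simp [Ftup, List.takeWhile_replicate]
          | cons c m => simp [Ftup, List.takeWhile_replicate]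
        rw [hD, hD] at h1
        exact h1
      subst ha
      have := List.append_cancel_left h
      rw [ih this]

lemma Ftup_prefix (l : List ℕ) (c : ℕ) (h : ∀ k, (l.take k).sum ≤ k + c) :
    ∀ j, ((Ftup l).take j).count D ≤ ((Ftup l).take j).count U + c := by
  induction l generalizing c with
  | nil => intro j; simp [Ftup]
  | cons a l ih =>
    intro j
    have ha : a ≤ 1 + c := by have := h 1; simpa using this
    have h' : ∀ k, (l.take k).sum ≤ k + (1 + c - a) := by
      intro k
      have := h (k + 1)
      simp [List.take_succ_cons] at this
      omega
    match j with
    | 0 => simp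
    | (m+1) =>
      have hDm := ih (1 + c - a) h' (m - a)
      simp [Ftup, List.take_append, List.count_replicate]
      omega

lemma Ftup_sum_take_le (l : List ℕ)
    (h : ∀ j, ((Ftup l).take j).count D ≤ ((Ftup l).take j).count U) (k : ℕ) :
    (l.take k).sum ≤ k := by
  have hsplit : Ftup l = Ftup (l.take k) ++ Ftup (l.drop k) := by
    rw [← Ftup_append, List.take_append_drop]
  have htake : (Ftup l).take (Ftup (l.take k)).length = Ftup (l.take k) := by
    rw [hsplit, List.take_left]
  have := h (Ftup (l.take k)).length
  rw [htake, count_D_Ftup, count_U_Ftup] at this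
  calc (l.take k).sum ≤ (l.take k).length := this
    _ ≤ k := List.length_take_le k l

def Gtup : List DyckStep → List ℕ
  | [] => []
  | _ :: rest => (rest.takeWhile (· = D)).length :: Gtup (rest.dropWhile (· = D))
termination_by w => w.length
decreasing_by
  simp only [List.length_cons]
  exact Nat.lt_succ_of_le ((List.dropWhile_sublist _).length_le)

lemma head?_dropWhile_ne (l : List DyckStep) : (l.dropWhile (· = D)).head? ≠ some D := by
  intro contra
  have hne : l.dropWhile (· = D) ≠ [] := by intro h; rw [h] at contra; simp at contra
  have h1 := List.head_dropWhile_not (· = D) hne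
  rw [List.head?_eq_head hne] at contra
  rw [Option.some_inj.mp contra] at h1
  simp at h1

lemma Ftup_Gtup : ∀ (w : List DyckStep), w.head? ≠ some D → Ftup (Gtup w) = w
  | [], _ => by simp [Gtup, Ftup]
  | x :: rest, h => by
    have hx : x = U := by
      rcases x.dichotomy with h1 | h1
      · exact h1
      · subst h1; simp at h
    subst hx
    have hrec := Ftup_Gtup (rest.dropWhile (· = D)) (head?_dropWhile_ne rest)
    rw [Gtup, Ftup, hrec]
    have hrep : List.replicate (rest.takeWhile (· = D)).length D = rest.takeWhile (· = D) := by
      symm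
      apply List.eq_replicate_of_mem
      intro b hb
      simpa using List.mem_takeWhile_imp hb
    rw [hrep, List.takeWhile_append_dropWhile]
termination_by w => w.length
decreasing_by
  simp only [List.length_cons]
  exact Nat.lt_succ_of_le ((List.dropWhile_sublist _).length_le)

lemma Gtup_Ftup (l : List ℕ) : Gtup (Ftup l) = l := by
  apply Ftup_inj
  apply Ftup_Gtup
  cases l with
  | nil => simp [Ftup]
  | cons a l => simp [Ftup]

lemma sum_take_ofFn {n : ℕ} (i : Fin n → ℕ) (k : ℕ) :
    ((List.ofFn i).take k).sum = ∑ j ∈ Finset.univ.filter (fun j : Fin n => (j : ℕ) < k), i j := by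
  induction k with
  | zero => simp
  | succ k ih =>
    by_cases hk : k < n
    · have hlen : k < (List.ofFn i).length := by simpa using hk
      rw [List.sum_take_succ _ _ hlen, ih]
      have hins : (Finset.univ.filter (fun j : Fin n => (j : ℕ) < k + 1))
          = insert ⟨k, hk⟩ (Finset.univ.filter (fun j : Fin n => (j : ℕ) < k)) := by
        ext j
        simp [Finset.mem_insert, Fin.ext_iff]
        omega
      rw [hins, Finset.sum_insert (by simp)]
      simp [List.get_ofFn]
      ring
    · push_neg at hk
      have h1 : (List.ofFn i).take (k+1) = (List.ofFn i).take k := by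
        rw [List.take_of_length_le (by simp; omega),
          List.take_of_length_le (by simpa using hk)]
      have h2 : (Finset.univ.filter (fun j : Fin n => (j : ℕ) < k + 1))
          = (Finset.univ.filter (fun j : Fin n => (j : ℕ) < k)) := by
        ext j
        have := j.isLt
        simp
        omega
      rw [h1, h2, ih]

lemma ofFn_getD {n : ℕ} (l : List ℕ) (h : l.length = n) :
    List.ofFn (fun j : Fin n => l.getD j 0) = l := by
  apply List.ext_getElem
  · simp [h]
  · intro m h1 h2
    simp [List.getElem_ofFn, List.getElem?_eq_getElem h2]

lemma head?_ne_D (p : DyckWord) : p.toList.head? ≠ some D := by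
  rcases eq_or_ne p.toList [] with h | h
  · simp [h]
  · rw [List.head?_eq_head h, DyckWord.head_eq_U p h]
    simp




/-- The number of tuples `(i₁,…,iₙ)` of nonnegative integers satisfying
`i₁+⋯+i_k ≤ k` for all `k ≤ n` and `i₁+⋯+i_n = n` equals the `n`-th Catalan number. -/
theorem catalan_count_monomials (n : ℕ) (hn : 0 < n) :
    {i : Fin n → ℕ |
        (∀ k ≤ n, ∑ j ∈ Finset.univ.filter (fun j : Fin n => (j : ℕ) < k), i j ≤ k) ∧
        (∑ j, i j = n)}.ncard = catalan n := by
  set S := {i : Fin n → ℕ |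
        (∀ k ≤ n, ∑ j ∈ Finset.univ.filter (fun j : Fin n => (j : ℕ) < k), i j ≤ k) ∧
        (∑ j, i j = n)} with hS
  have key : ∀ (i : Fin n → ℕ), i ∈ S ↔
      ((∀ k, ((List.ofFn i).take k).sum ≤ k) ∧ (List.ofFn i).sum = n) := by
    intro i
    simp only [hS, Set.mem_setOf_eq, sum_take_ofFn, List.sum_ofFn]
    constructor
    · rintro ⟨h1, h2⟩
      refine ⟨fun k => ?_, h2⟩
      rcases le_or_gt k n with hk | hk
      · exact h1 k hk
      · calc ∑ j ∈ Finset.univ.filter (fun j : Fin n => (j : ℕ) < k), i j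
            ≤ ∑ j, i j := Finset.sum_le_sum_of_subset (Finset.filter_subset _ _)
          _ = n := h2
          _ ≤ k := hk.le
    · rintro ⟨h1, h2⟩
      exact ⟨fun k _ => h1 k, h2⟩
  -- construct the equivalence
  have e : S ≃ {p : DyckWord // p.semilength = n} := by
    refine ⟨fun ⟨i, hi⟩ => ⟨⟨Ftup (List.ofFn i), ?_, ?_⟩, ?_⟩,
      fun ⟨p, hp⟩ => ⟨fun j => (Gtup p.toList).getD j 0, ?_⟩, ?_, ?_⟩
    · rw [count_U_Ftup, count_D_Ftup, List.length_ofFn, ((key i).mp hi).2]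
    · intro j
      have := Ftup_prefix (List.ofFn i) 0 (fun k => by simpa using ((key i).mp hi).1 k) j
      simpa using this
    · show (Ftup (List.ofFn i)).count U = n
      rw [count_U_Ftup, List.length_ofFn]
    · -- membership of inverse
      have hFG : Ftup (Gtup p.toList) = p.toList := Ftup_Gtup _ (head?_ne_D p)
      have hlen : (Gtup p.toList).length = n := by
        have := congrArg (List.count U) hFG
        rw [count_U_Ftup] at this
        rw [this]; exact hp
      have hofFn : List.ofFn (fun j : Fin n => (Gtup p.toList).getD j 0) = Gtup p.toList :=
        ofFn_getD _ hlen
      rw [key, hofFn]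
      constructor
      · intro k
        apply Ftup_sum_take_le
        intro j
        rw [hFG]
        exact p.count_D_le_count_U j
      · have := congrArg (List.count D) hFG
        rw [count_D_Ftup] at this
        rw [this, ← p.count_U_eq_count_D]; exact hp
    · rintro ⟨i, hi⟩
      ext j
      show (Gtup (Ftup (List.ofFn i))).getD j 0 = i j
      rw [Gtup_Ftup]
      have hj : (j : ℕ) < (List.ofFn i).length := by simp [j.isLt]
      simp [List.getElem?_eq_getElem hj]
    · rintro ⟨p, hp⟩
      have hFG : Ftup (Gtup p.toList) = p.toList := Ftup_Gtup _ (head?_ne_D p)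
      have hlen : (Gtup p.toList).length = n := by
        have := congrArg (List.count U) hFG
        rw [count_U_Ftup] at this
        rw [this]; exact hp
      ext1
      ext1
      show Ftup (List.ofFn fun j : Fin n => (Gtup p.toList).getD j 0) = p.toList
      rw [ofFn_getD _ hlen, hFG]
  calc S.ncard = Nat.card S := (Nat.card_coe_set_eq S).symm
    _ = Nat.card {p : DyckWord // p.semilength = n} := Nat.card_congr e
    _ = Fintype.card {p : DyckWord // p.semilength = n} := Nat.card_eq_fintype_card
    _ = catalan n := DyckWord.card_dyckWord_semilength_eq_catalan n
end

section
/- The number of tuples $(i_1,\ldots,i_n)$ of nonnegative integers satisfying $i_1+\cdots+i_k \le k$ for all $1 \le k \le n$ (with no constraint that the total sum equals $n$) equals the $(n+1)$-st Catalan number $C(n+1)=\frac{1}{n+2}\binom{2n+2}{n+1}$. -/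
open Finset

/-- Number of tuples `i : Fin n → ℕ` with all partial sums `∑_{j<k} i j ≤ k + c`. -/
def Dtab : ℕ → ℕ → ℕ
  | 0, _ => 1
  | n+1, c => ∑ u ∈ Finset.range (c+2), Dtab n u

@[simp] lemma Dtab_zero (c : ℕ) : Dtab 0 c = 1 := rfl

lemma Dtab_succ (n c : ℕ) : Dtab (n+1) c = ∑ u ∈ Finset.range (c+2), Dtab n u := rfl

lemma hockey (a k m : ℕ) :
    Nat.choose a (k+1) + ∑ u ∈ Finset.range m, Nat.choose (a+u) k
      = Nat.choose (a+m) (k+1) := by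
  induction m with
  | zero => simp
  | succ m ih =>
    rw [Finset.sum_range_succ, show a + (m+1) = (a+m)+1 by omega, Nat.choose_succ_succ]
    simp only [Nat.succ_eq_add_one]
    omega

lemma Dtab_int (n : ℕ) : ∀ c, (Dtab n c : ℤ) =
    ((2*n+c+1).choose n : ℤ) - ((2*n+c+1).choose (n+c+2) : ℤ) := by
  induction n with
  | zero =>
    intro c
    simp [Nat.choose_eq_zero_of_lt (show 2*0+c+1 < 0+c+2 by omega)]
  | succ n IH =>
    intro c
    cases n with
    | zero =>
      rw [Dtab_succ]
      simp only [Dtab_zero]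
      rw [Finset.sum_const, Finset.card_range]
      have h1 : (2*1+c+1).choose 1 = c + 3 := by
        rw [Nat.choose_one_right]; omega
      have h2 : (2*1+c+1).choose (1+c+2) = 1 := by
        rw [show 2*1+c+1 = 1+c+2 by omega, Nat.choose_self]
      rw [h1, h2, smul_eq_mul, mul_one]
      push_cast
      ring
    | succ m =>
      rw [Dtab_succ]
      push_cast
      rw [Finset.sum_congr rfl (fun u _ => IH u)]
      rw [Finset.sum_sub_distrib]
      have e1 : ∑ u ∈ Finset.range (c+2), ((2*(m+1)+u+1).choose (m+1) : ℤ)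
          = ((2*m+3+(c+2)).choose (m+2) : ℤ) - ((2*m+3).choose (m+2) : ℤ) := by
        have := hockey (2*m+3) (m+1) (c+2)
        have h' : ∑ u ∈ Finset.range (c+2), ((2*(m+1)+u+1).choose (m+1) : ℤ)
            = ∑ u ∈ Finset.range (c+2), ((2*m+3+u).choose (m+1) : ℤ) :=
          Finset.sum_congr rfl (fun u _ => by norm_num; ring_nf)
        rw [h']
        push_cast [← this]; ring
      have e2 : ∑ u ∈ Finset.range (c+2), ((2*(m+1)+u+1).choose (m+1+u+2) : ℤ)
          = ((2*m+3+(c+2)).choose (m+1) : ℤ) - ((2*m+3).choose (m+1) : ℤ) := by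
        have hs : ∀ u, (2*(m+1)+u+1).choose (m+1+u+2) = (2*m+3+u).choose m := by
          intro u
          have h := Nat.choose_symm (show m ≤ 2*m+3+u by omega)
          rw [show 2*m+3+u - m = m+1+u+2 by omega] at h
          rw [show 2*(m+1)+u+1 = 2*m+3+u by omega, h]
        rw [Finset.sum_congr rfl (fun u _ => by rw [hs u])]
        have := hockey (2*m+3) m (c+2)
        rw [show m + 1 = m + 1 from rfl]
        push_cast [← this]; ring
      rw [e1, e2]
      have s1 : (2*m+3).choose (m+2) = (2*m+3).choose (m+1) := by
        have h := Nat.choose_symm (show m+1 ≤ 2*m+3 by omega)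
        rw [show 2*m+3 - (m+1) = m+2 by omega] at h
        exact h
      have s2 : (2*(m+1+1)+c+1).choose (m+1+1+c+2) = (2*m+3+(c+2)).choose (m+1) := by
        have h := Nat.choose_symm (show m+1 ≤ 2*m+3+(c+2) by omega)
        rw [show 2*m+3+(c+2) - (m+1) = m+1+1+c+2 by omega] at h
        rw [show 2*(m+1+1)+c+1 = 2*m+3+(c+2) by omega, h]
      have s3 : (2*(m+1+1)+c+1).choose (m+1+1) = (2*m+3+(c+2)).choose (m+2) := by
        rw [show 2*(m+1+1)+c+1 = 2*m+3+(c+2) by omega]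
      rw [s2, s3, s1]
      push_cast
      ring

lemma catalan_eq_Dtab (n : ℕ) : catalan (n+1) = Dtab n 0 := by
  have h2 : (n+2) * catalan (n+1) = (2*(n+1)).choose (n+1) := by
    have := succ_mul_catalan_eq_centralBinom (n+1)
    rwa [Nat.centralBinom] at this
  have e1 : (2*(n+1)).choose (n+1) = (2*n+1).choose n + (2*n+1).choose (n+1) := by
    rw [show 2*(n+1) = (2*n+1)+1 by omega]
    exact Nat.choose_succ_succ _ _
  have e2 : (2*n+1).choose (n+1) = (2*n+1).choose n := by
    have h := Nat.choose_symm (show n ≤ 2*n+1 by omega)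
    rw [show 2*n+1 - n = n+1 by omega] at h
    exact h
  have e3 : (2*n+1).choose (n+2) * (n+2) = (2*n+1).choose (n+1) * n := by
    have h := Nat.choose_succ_right_eq (2*n+1) (n+1)
    rwa [show 2*n+1 - (n+1) = n by omega] at h
  have hD : ((n:ℤ)+2) * (Dtab n 0 : ℤ) = ((2*(n+1)).choose (n+1) : ℤ) := by
    rw [Dtab_int n 0]
    have e1' : ((2*(n+1)).choose (n+1) : ℤ)
        = ((2*n+1).choose n : ℤ) + ((2*n+1).choose (n+1) : ℤ) := by exact_mod_cast e1
    have e2' : ((2*n+1).choose (n+1) : ℤ) = ((2*n+1).choose n : ℤ) := by exact_mod_cast e2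
    have e3' : ((2*n+1).choose (n+2) : ℤ) * ((n:ℤ)+2)
        = ((2*n+1).choose (n+1) : ℤ) * n := by exact_mod_cast e3
    rw [show 2*n+0+1 = 2*n+1 by omega, show n+0+2 = n+2 by omega]
    linear_combination (-1 : ℤ)*e1' - ((n:ℤ)+1)*e2' - e3'
  have hN : (n+2) * Dtab n 0 = (2*(n+1)).choose (n+1) := by exact_mod_cast hD
  have := h2.trans hN.symm
  exact Nat.eq_of_mul_eq_mul_left (by omega) this

/-- The generalized set: partial sums bounded by `k + c`. -/
def Pset (n c : ℕ) : Set (Fin n → ℕ) :=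
  {i | ∀ k, 1 ≤ k → k ≤ n →
    ∑ j ∈ Finset.univ.filter (fun j : Fin n => (j : ℕ) < k), i j ≤ k + c}

lemma sum_filter_succ (n k : ℕ) (i : Fin (n+1) → ℕ) :
    ∑ j ∈ Finset.univ.filter (fun j : Fin (n+1) => (j : ℕ) < k+1), i j
      = i 0 + ∑ j ∈ Finset.univ.filter (fun j : Fin n => (j : ℕ) < k), Fin.tail i j := by
  rw [Finset.sum_filter, Finset.sum_filter, Fin.sum_univ_succ]
  simp [Fin.tail, Nat.succ_lt_succ_iff]

lemma mem_head_le {n c : ℕ} {i : Fin (n+1) → ℕ} (hi : i ∈ Pset (n+1) c) : i 0 ≤ c + 1 := by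
  have h := hi 1 le_rfl (by omega)
  simp [Finset.sum_filter, Fin.sum_univ_succ] at h
  omega

lemma tail_mem {n c t : ℕ} (ht : t ≤ c+1) {i : Fin (n+1) → ℕ} (h0 : i 0 = t)
    (hi : i ∈ Pset (n+1) c) : Fin.tail i ∈ Pset n (c+1-t) := by
  intro k hk hkn
  have h := hi (k+1) (by omega) (by omega)
  rw [sum_filter_succ] at h
  omega

lemma cons_mem {n c t : ℕ} (ht : t ≤ c+1) {j : Fin n → ℕ} (hj : j ∈ Pset n (c+1-t)) :
    Fin.cons t j ∈ Pset (n+1) c := by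
  intro k hk hkn
  obtain ⟨k, rfl⟩ : ∃ k', k = k'+1 := ⟨k-1, by omega⟩
  rw [sum_filter_succ]
  simp only [Fin.cons_zero, Fin.tail_cons]
  rcases Nat.eq_zero_or_pos k with rfl | hkpos
  · simp only [Nat.not_lt_zero, Finset.filter_false, Finset.sum_empty]
    omega
  · have := hj k hkpos (by omega)
    omega

lemma finite_Pset (n c : ℕ) : (Pset n c).Finite := by
  apply Set.Finite.subset (Set.Finite.pi (fun _ : Fin n => Set.finite_Iic (n+c)))
  intro i hi
  simp only [Set.mem_pi, Set.mem_univ, Set.mem_Iic, forall_true_left]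
  intro j
  have h := hi (j+1) (by omega) (by omega)
  have hle : i j ≤ ∑ j' ∈ Finset.univ.filter (fun j' : Fin n => (j' : ℕ) < (j:ℕ)+1), i j' :=
    Finset.single_le_sum (fun _ _ => Nat.zero_le _)
      (by simp)
  have : (j:ℕ) + 1 ≤ n := j.isLt
  omega

lemma nat_card_sigma {m : ℕ} (f : Fin m → Type) [h : ∀ t, Finite (f t)] :
    Nat.card (Σ t, f t) = ∑ t, Nat.card (f t) := by
  letI := fun t => Fintype.ofFinite (f t)
  rw [Nat.card_eq_fintype_card, Fintype.card_sigma]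
  simp [Nat.card_eq_fintype_card]

lemma card_Pset (n : ℕ) : ∀ c, (Pset n c).ncard = Dtab n c := by
  induction n with
  | zero =>
    intro c
    have h : Pset 0 c = Set.univ := by
      ext i
      simp only [Pset, Set.mem_setOf_eq, Set.mem_univ, iff_true]
      intro k hk hk0; omega
    rw [h, Set.ncard_univ]
    simp
  | succ n IH =>
    intro c
    haveI hfin : ∀ t : Fin (c+2), Finite ↥(Pset n (c+1-(t:ℕ))) :=
      fun t => (finite_Pset n _).to_subtype
    rw [← Nat.card_coe_set_eq]
    let φ : ↥(Pset (n+1) c) → Fin (c+2) :=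
      fun i => ⟨(i : Fin (n+1) → ℕ) 0, by have := mem_head_le i.2; omega⟩
    have key : Nat.card ↥(Pset (n+1) c)
        = ∑ t : Fin (c+2), Nat.card ↥(Pset n (c+1-(t:ℕ))) := by
      rw [← nat_card_sigma]
      refine Nat.card_congr ((Equiv.sigmaFiberEquiv φ).symm.trans
        (Equiv.sigmaCongrRight fun t => ?_))
      have ht : (t:ℕ) ≤ c+1 := by omega
      exact {
        toFun := fun p => ⟨Fin.tail p.1.1,
          tail_mem ht (congrArg Fin.val p.2) p.1.2⟩
        invFun := fun q => ⟨⟨Fin.cons (t:ℕ) q.1, cons_mem ht q.2⟩, by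
          apply Fin.ext
          simp [φ]⟩
        left_inv := fun p => by
          apply Subtype.ext
          apply Subtype.ext
          have h0 : p.1.1 0 = (t:ℕ) := congrArg Fin.val p.2
          simp only [← h0, Fin.cons_self_tail]
        right_inv := fun q => by
          apply Subtype.ext
          simp [Fin.tail_cons] }
    rw [key, Dtab_succ]
    calc ∑ t : Fin (c+2), Nat.card ↥(Pset n (c+1-(t:ℕ)))
        = ∑ t : Fin (c+2), Dtab n (c+1-(t:ℕ)) := by
          refine Finset.sum_congr rfl fun t _ => ?_
          rw [Nat.card_coe_set_eq, IH]
      _ = ∑ u ∈ Finset.range (c+2), Dtab n (c+1-u) := by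
          exact Fin.sum_univ_eq_sum_range (fun u => Dtab n (c+1-u)) (c+2)
      _ = ∑ u ∈ Finset.range (c+2), Dtab n u := by
          rw [← Finset.sum_range_reflect]
          refine Finset.sum_congr rfl fun u hu => ?_
          congr 1
          simp only [Finset.mem_range] at hu
          omega

/-- The number of tuples `(i₁,…,iₙ)` of nonnegative integers satisfying
`i₁+⋯+i_k ≤ k` for all `1 ≤ k ≤ n` (with no constraint on the total sum)
equals the `(n+1)`-st Catalan number. -/
theorem catalan_count_ballot_tuples (n : ℕ) (hn : 0 < n) :
    {i : Fin n → ℕ |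
        ∀ k, 1 ≤ k → k ≤ n →
          ∑ j ∈ Finset.univ.filter (fun j : Fin n => (j : ℕ) < k), i j ≤ k}.ncard
      = catalan (n + 1) := by
  have hset : {i : Fin n → ℕ |
        ∀ k, 1 ≤ k → k ≤ n →
          ∑ j ∈ Finset.univ.filter (fun j : Fin n => (j : ℕ) < k), i j ≤ k} = Pset n 0 := by
    ext i
    simp [Pset]
  rw [hset, card_Pset, catalan_eq_Dtab]
end

section
/- Let $R = k[\zeta_1,\ldots,\zeta_N; \xi_1,\ldots,\xi_N]$ be the free graded-commutative algebra over a field $k$ of characteristic zero with odd generators $\zeta_i$ of degree 1 and even generators $\xi_i$ of degree 2, and let $I$ be the ideal generated by all monomials $\xi_1^{i_1}\cdots\xi_k^{i_k}$ with $i_1+\cdots+i_k > k$ for some $1 \le k \le N$. Consider the differential $d = \sum_{i=1}^N \xi_i \partial/\partial \zeta_i$ on $R/I$. Then the cohomology of $(R/I, d)$ has a basis given by the classes of monomials $\zeta_{\alpha_1}\cdots\zeta_{\alpha_s}\,\xi_1^{i_1}\cdots\xi_{\alpha_s}^{i_{\alpha_s}}$ with $1 \le \alpha_1 < \cdots < \alpha_s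 \le N$, $i_1+\cdots+i_k \le k$ for all $k \le \alpha_s$, and $i_1+\cdots+i_{\alpha_s} = \alpha_s$, together with the class of $1$. -/
open Finset
open scoped Classical

variable (k : Type*) [Field k] [CharZero k]

/-- A monomial `ζ_S · ξ^e` in the free graded-commutative algebra
`k[ζ₁,…,ζ_N; ξ₁,…,ξ_N]` (odd `ζ`'s of degree 1, even `ξ`'s of degree 2). -/
abbrev WMon (N : ℕ) := Finset (Fin N) × (Fin N → ℕ)

/-- A `ξ`-exponent vector lies in the monomial ideal `I` generated by the
`ξ₁^{i₁}⋯ξ_K^{i_K}` with `i₁+⋯+i_K > K` iff some initial partial sum exceeds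
its index. -/
def badXi {N : ℕ} (e : Fin N → ℕ) : Prop :=
  ∃ K : ℕ, 1 ≤ K ∧ K ≤ N ∧
    K < ∑ j ∈ Finset.univ.filter (fun j : Fin N => (j : ℕ) < K), e j

/-- Monomials surviving in the quotient `R/I`. -/
abbrev GoodMon (N : ℕ) := {m : WMon N // ¬ badXi m.2}

/-- The quotient `R/I` as a vector space, with basis the surviving monomials. -/
abbrev WModule (N : ℕ) := GoodMon N →₀ k

/-- Value of the differential `d = Σ ξᵢ ∂/∂ζᵢ` on a basis monomial of `R/I`. -/
noncomputable def weylDMon {N : ℕ} (m : GoodMon N) : WModule k N :=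
  ∑ a ∈ m.1.1,
    ((-1 : k) ^ ((m.1.1.filter (fun b => b < a)).card)) •
      (if h : ¬ badXi (Function.update m.1.2 a (m.1.2 a + 1)) then
        Finsupp.single (⟨(m.1.1.erase a, Function.update m.1.2 a (m.1.2 a + 1)), h⟩ :
          GoodMon N) (1 : k)
      else 0)

/-- The differential `d = Σᵢ ξᵢ ∂/∂ζᵢ` on `R/I`. -/
noncomputable def weylD (N : ℕ) : WModule k N →ₗ[k] WModule k N :=
  Finsupp.lsum k (fun m => LinearMap.toSpanSingleton k (WModule k N) (weylDMon k m))

/-- The monomials `ζ_{α₁}⋯ζ_{α_s} ξ₁^{i₁}⋯ξ_{α_s}^{i_{α_s}}` (1-indexed in the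
paper; here 0-indexed, `α_s = max S`) with `i₁+⋯+i_k ≤ k` for all `k ≤ α_s` and
`i₁+⋯+i_{α_s} = α_s`, together with the monomial `1`. -/
def isCocycleMon {N : ℕ} (m : WMon N) : Prop :=
  (m.1 = ∅ ∧ m.2 = 0) ∨
  (∃ h : m.1.Nonempty,
    (∀ j : Fin N, m.1.max' h < j → m.2 j = 0) ∧
    (∀ K : ℕ, K ≤ (m.1.max' h : ℕ) + 1 →
      ∑ j ∈ Finset.univ.filter (fun j : Fin N => (j : ℕ) < K), m.2 j ≤ K) ∧
    (∑ j ∈ Finset.univ.filter (fun j : Fin N => (j : ℕ) ≤ (m.1.max' h : ℕ)), m.2 j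
      = (m.1.max' h : ℕ) + 1))

noncomputable instance weylKerHasQuotient (N : ℕ) :
    HasQuotient ↥(LinearMap.ker (weylD k N))
      (Submodule k ↥(LinearMap.ker (weylD k N))) :=
  Submodule.hasQuotient (R := k) (M := ↥(LinearMap.ker (weylD k N)))

/-- The cohomology `ker d / (im d ∩ ker d)` of `(R/I, d)`. -/
noncomputable abbrev WeylCohomology (N : ℕ) :=
  ↥(LinearMap.ker (weylD k N)) ⧸
    ((LinearMap.range (weylD k N) ⊓ LinearMap.ker (weylD k N)).comap
      (LinearMap.ker (weylD k N)).subtype)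

namespace WeylAux

variable {N : ℕ}

/-- prefix sum of exponents -/
def psum (e : Fin N → ℕ) (K : ℕ) : ℕ :=
  ∑ j ∈ Finset.univ.filter (fun j : Fin N => (j : ℕ) < K), e j

lemma good_iff {e : Fin N → ℕ} : ¬ badXi e ↔ ∀ K, 1 ≤ K → K ≤ N → psum e K ≤ K := by
  unfold badXi psum
  push_neg
  tauto

lemma psum_mono {e e' : Fin N → ℕ} (h : ∀ j, e j ≤ e' j) (K : ℕ) : psum e K ≤ psum e' K :=
  Finset.sum_le_sum fun j _ => h j

lemma good_of_le {e e' : Fin N → ℕ} (h : ∀ j, e j ≤ e' j) (he' : ¬ badXi e') : ¬ badXi e := by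
  rw [good_iff] at *
  exact fun K h1 h2 => le_trans (psum_mono h K) (he' K h1 h2)

lemma psum_update (e : Fin N → ℕ) (a : Fin N) (n : ℕ) (K : ℕ) :
    psum (Function.update e a n) K + (if (a : ℕ) < K then e a else 0)
      = psum e K + (if (a : ℕ) < K then n else 0) := by
  unfold psum
  by_cases h : (a : ℕ) < K
  · have ha : a ∈ Finset.univ.filter (fun j : Fin N => (j : ℕ) < K) := by simp [h]
    rw [if_pos h, if_pos h, Finset.sum_update_of_mem ha,
      Finset.sum_eq_sum_sdiff_singleton_add ha e]
    ring
  · have ha : a ∉ Finset.univ.filter (fun j : Fin N => (j : ℕ) < K) := by simp [h]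
    rw [if_neg h, if_neg h, Finset.sum_update_of_notMem ha]

lemma psum_update_lt (e : Fin N → ℕ) {a : Fin N} {n K : ℕ} (h : (a : ℕ) < K) :
    psum (Function.update e a n) K + e a = psum e K + n := by
  have := psum_update e a n K
  rwa [if_pos h, if_pos h] at this

lemma psum_update_ge (e : Fin N → ℕ) {a : Fin N} {n K : ℕ} (h : ¬ (a : ℕ) < K) :
    psum (Function.update e a n) K = psum e K := by
  have := psum_update e a n K
  rwa [if_neg h, if_neg h, add_zero, add_zero] at this

lemma psum_eq_total {e : Fin N → ℕ} {K : ℕ} (hsupp : ∀ j : Fin N, K ≤ (j : ℕ) → e j = 0) :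
    psum e K = ∑ j, e j := by
  unfold psum
  refine Finset.sum_subset (Finset.filter_subset _ _) fun j _ hj => ?_
  exact hsupp j (by simpa [not_lt] using hj)

lemma psum_N (e : Fin N → ℕ) : psum e N = ∑ j, e j := by
  unfold psum
  rw [Finset.filter_true_of_mem fun j _ => j.isLt]

lemma total_le {e : Fin N → ℕ} (he : ¬ badXi e) {a : Fin N}
    (hsupp : ∀ j : Fin N, (a : ℕ) < (j : ℕ) → e j = 0) : ∑ j, e j ≤ (a : ℕ) + 1 := by
  have h1 : psum e ((a : ℕ) + 1) = ∑ j, e j :=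
    psum_eq_total fun j hj => hsupp j (by omega)
  have := (good_iff.mp he) ((a : ℕ) + 1) (by omega) a.isLt
  omega

end WeylAux
namespace WeylAux

/-- The pivot set `S ∪ supp e` of a monomial. -/
def piv (m : WMon N) : Finset (Fin N) :=
  m.1 ∪ Finset.univ.filter (fun j => m.2 j ≠ 0)

lemma mem_piv {m : WMon N} {j : Fin N} : j ∈ piv m ↔ j ∈ m.1 ∨ m.2 j ≠ 0 := by
  simp [piv]

lemma update_sub_le (e : Fin N → ℕ) (a : Fin N) (j : Fin N) :
    Function.update e a (e a - 1) j ≤ e j := by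
  rcases eq_or_ne j a with rfl | h
  · simp
  · rw [Function.update_of_ne h]

/-- value of the homotopy `h` on a basis monomial. -/
noncomputable def weylHMon (m : GoodMon N) : WModule k N :=
  if hT : (piv m.1).Nonempty then
    if _ : (piv m.1).max' hT ∈ m.1.1 then 0
    else ((-1 : k) ^ m.1.1.card) •
      Finsupp.single (⟨(insert ((piv m.1).max' hT) m.1.1,
        Function.update m.1.2 ((piv m.1).max' hT) (m.1.2 ((piv m.1).max' hT) - 1)),
        good_of_le (update_sub_le m.1.2 _) m.2⟩ : GoodMon N) 1
  else 0

noncomputable def weylH (N : ℕ) : WModule k N →ₗ[k] WModule k N :=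
  Finsupp.lsum k (fun m => LinearMap.toSpanSingleton k (WModule k N) (weylHMon k m))

noncomputable def weylP (N : ℕ) : WModule k N →ₗ[k] WModule k N :=
  LinearMap.id - weylD k N ∘ₗ weylH k N - weylH k N ∘ₗ weylD k N

lemma weylD_single (m : GoodMon N) :
    weylD k N (Finsupp.single m 1) = weylDMon k m := by
  rw [weylD, Finsupp.lsum_single, LinearMap.toSpanSingleton_apply, one_smul]

lemma weylH_single (m : GoodMon N) :
    weylH k N (Finsupp.single m 1) = weylHMon k m := by
  rw [weylH, Finsupp.lsum_single, LinearMap.toSpanSingleton_apply, one_smul]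

lemma weylP_single (m : GoodMon N) :
    weylP k N (Finsupp.single m 1) = Finsupp.single m 1
      - weylD k N (weylHMon k m) - weylH k N (weylDMon k m) := by
  simp [weylP, weylD_single, weylH_single, LinearMap.sub_apply]

/-- the span of the critical (cocycle) monomials -/
noncomputable def critSpan (N : ℕ) : Submodule k (WModule k N) :=
  Submodule.span k (Set.range
    (fun x : {m : GoodMon N // isCocycleMon m.1} => Finsupp.single x.1 (1 : k)))

lemma single_mem_critSpan {m : GoodMon N} (h : isCocycleMon m.1) :
    Finsupp.single m (1 : k) ∈ critSpan k N :=
  Submodule.subset_span ⟨⟨m, h⟩, rfl⟩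

end WeylAux
namespace WeylAux
set_option linter.unusedSectionVars false

lemma max'_eq_of {s : Finset (Fin N)} (h : s.Nonempty) {a : Fin N} (ha : a ∈ s)
    (hb : ∀ b ∈ s, b ≤ a) : s.max' h = a :=
  le_antisymm (Finset.max'_le _ _ _ hb) (Finset.le_max' _ _ ha)

lemma filter_le_eq (M : ℕ) :
    Finset.univ.filter (fun j : Fin N => (j : ℕ) ≤ M)
      = Finset.univ.filter (fun j : Fin N => (j : ℕ) < M + 1) := by
  apply Finset.filter_congr
  intro j _
  simp [Nat.lt_succ_iff]

lemma isCocycleMon_of {S : Finset (Fin N)} {e : Fin N → ℕ} {a : Fin N} (hS : a ∈ S)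
    (hbound : ∀ j ∈ S, j ≤ a) (hsupp : ∀ j, a < j → e j = 0) (hgood : ¬ badXi e)
    (htot : ∑ j, e j = (a : ℕ) + 1) : isCocycleMon (S, e) := by
  have hne : S.Nonempty := ⟨a, hS⟩
  have hmax : S.max' hne = a := max'_eq_of hne hS hbound
  refine Or.inr ⟨hne, ?_, ?_, ?_⟩
  · intro j hj
    exact hsupp j (hmax ▸ hj)
  · intro K hK
    rcases Nat.eq_zero_or_pos K with rfl | hK1
    · simp [psum]
    · have : psum e K ≤ K := good_iff.mp hgood K hK1 (by rw [hmax] at hK; omega)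
      exact this
  · show ∑ j ∈ Finset.univ.filter (fun j : Fin N => (j : ℕ) ≤ ((S.max' hne : Fin N) : ℕ)), e j = _
    rw [hmax, filter_le_eq]
    show psum e ((a : ℕ) + 1) = (a : ℕ) + 1
    rw [psum_eq_total fun j hj => hsupp j (by omega)]
    exact htot

lemma crit_d_zero {m : GoodMon N} (h : isCocycleMon m.1) : weylDMon k m = 0 := by
  rcases h with ⟨hS, _⟩ | ⟨hne, h1, _, h3⟩
  · rw [weylDMon, hS]
    simp
  · rw [weylDMon]
    refine Finset.sum_eq_zero fun b hb => ?_
    rw [dif_neg, smul_zero]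
    rw [not_not]
    set M := m.1.1.max' hne with hM
    refine ⟨(M : ℕ) + 1, by omega, M.isLt, ?_⟩
    have hb' : (b : ℕ) < (M : ℕ) + 1 := by
      have := Finset.le_max' m.1.1 b hb
      rw [← hM] at this
      omega
    have h4 : psum m.1.2 ((M : ℕ) + 1) = (M : ℕ) + 1 := by
      unfold psum
      rw [← filter_le_eq]
      exact h3
    have := psum_update_lt m.1.2 (n := m.1.2 b + 1) (a := b) (K := (M : ℕ) + 1) hb'
    show ((M : ℕ) + 1) < psum (Function.update m.1.2 b (m.1.2 b + 1)) ((M : ℕ) + 1)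
    omega

lemma crit_h_zero {m : GoodMon N} (h : isCocycleMon m.1) : weylHMon k m = 0 := by
  rcases h with ⟨hS, he⟩ | ⟨hne, h1, _, _⟩
  · rw [weylHMon, dif_neg]
    rw [piv, hS, he]
    simp
  · have hT : (piv m.1).Nonempty := ⟨m.1.1.max' hne, mem_piv.2 (Or.inl (Finset.max'_mem _ _))⟩
    have hmem : (piv m.1).max' hT ∈ m.1.1 := by
      set a := (piv m.1).max' hT with ha
      set M := m.1.1.max' hne with hM
      have hMa : M ≤ a := Finset.le_max' _ _ (mem_piv.2 (Or.inl (Finset.max'_mem _ _)))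
      rcases mem_piv.1 ((piv m.1).max'_mem hT) with hmem | hea
      · exact hmem
      · have haM : a ≤ M := by
          by_contra hc
          exact hea (h1 a (lt_of_not_ge hc))
        have : a = M := le_antisymm haM hMa
        rw [this]
        exact Finset.max'_mem _ _
    rw [weylHMon, dif_pos hT, dif_pos hmem]

lemma crit_P_single {m : GoodMon N} (h : isCocycleMon m.1) :
    weylP k N (Finsupp.single m 1) = Finsupp.single m 1 := by
  rw [weylP_single, crit_d_zero k h, crit_h_zero k h]
  simp

/-- total sum in the `U` case -/
lemma U_total {S : Finset (Fin N)} {e : Fin N → ℕ} (hgm : ¬ badXi e)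
    (hT : (piv ((S, e) : WMon N)).Nonempty)
    (haS : (piv ((S, e) : WMon N)).max' hT ∈ S) (hnc : ¬ isCocycleMon (S, e)) :
    ∑ j, e j ≤ ((piv ((S, e) : WMon N)).max' hT : ℕ) := by
  set a := (piv ((S, e) : WMon N)).max' hT with ha
  have hsupp : ∀ j, a < j → e j = 0 := by
    intro j hj
    by_contra hc
    exact absurd (Finset.le_max' _ j (mem_piv.2 (Or.inr hc))) (not_le.mpr hj)
  have hle : ∑ j, e j ≤ (a : ℕ) + 1 := total_le hgm hsupp
  rcases Nat.lt_or_ge (∑ j, e j) ((a : ℕ) + 1) with hlt | hge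
  · omega
  · exact absurd (isCocycleMon_of haS
      (fun j hj => Finset.le_max' _ j (mem_piv.2 (Or.inl hj))) hsupp hgm (by omega)) hnc

end WeylAux
namespace WeylAux
set_option linter.unusedSectionVars false

lemma piv_erase_update {S : Finset (Fin N)} {e : Fin N → ℕ} {b : Fin N} (hb : b ∈ S) :
    piv (S.erase b, Function.update e b (e b + 1)) = piv (S, e) := by
  ext j
  rcases eq_or_ne j b with rfl | hj
  · simp [mem_piv, hb]
  · simp [mem_piv, hj, Function.update_of_ne hj]

lemma piv_insert_update {S : Finset (Fin N)} {e : Fin N → ℕ} {a : Fin N} (ha : e a ≠ 0) :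
    piv (insert a S, Function.update e a (e a - 1)) = piv (S, e) := by
  ext j
  rcases eq_or_ne j a with rfl | hj
  · simp [mem_piv, ha]
  · simp [mem_piv, hj, Function.update_of_ne hj]

lemma update_add_sub (e : Fin N → ℕ) (a : Fin N) :
    Function.update (Function.update e a (e a + 1)) a
      (Function.update e a (e a + 1) a - 1) = e := by
  rw [Function.update_self, Function.update_idem]
  simp

lemma update_sub_add (e : Fin N → ℕ) (a : Fin N) (ha : e a ≠ 0) :
    Function.update (Function.update e a (e a - 1)) a
      (Function.update e a (e a - 1) a + 1) = e := by
  rw [Function.update_self, Function.update_idem]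
  rw [Nat.sub_add_cancel (Nat.one_le_iff_ne_zero.mpr ha), Function.update_eq_self]

lemma weylHMon_zero {S : Finset (Fin N)} {e : Fin N → ℕ} (hm : ¬ badXi e) {a : Fin N}
    (ha : a ∈ piv (S, e)) (hb : ∀ j ∈ piv (S, e), j ≤ a) (hmem : a ∈ S) :
    weylHMon k (⟨(S, e), hm⟩ : GoodMon N) = 0 := by
  have hT' : (piv ((S, e) : WMon N)).Nonempty := ⟨a, ha⟩
  have hmax : (piv ((S, e) : WMon N)).max' hT' = a := max'_eq_of hT' ha hb
  rw [← hmax] at hmem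
  rw [weylHMon, dif_pos hT', dif_pos hmem]

lemma weylHMon_eq {S : Finset (Fin N)} {e : Fin N → ℕ} (hm : ¬ badXi e) {a : Fin N}
    (ha : a ∈ piv (S, e)) (hb : ∀ j ∈ piv (S, e), j ≤ a) (hmem : a ∉ S)
    (hgood : ¬ badXi (Function.update e a (e a - 1))) :
    weylHMon k (⟨(S, e), hm⟩ : GoodMon N) = ((-1 : k) ^ S.card) •
      Finsupp.single (⟨(insert a S, Function.update e a (e a - 1)),
        hgood⟩ : GoodMon N) 1 := by
  have hT' : (piv ((S, e) : WMon N)).Nonempty := ⟨a, ha⟩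
  have hmax : (piv ((S, e) : WMon N)).max' hT' = a := max'_eq_of hT' ha hb
  rw [← hmax] at hmem
  rw [weylHMon, dif_pos hT', dif_neg hmem]
  simp only [hmax]

end WeylAux
namespace WeylAux
set_option linter.unusedSectionVars false

lemma filter_lt_max {S : Finset (Fin N)} {a : Fin N} (haS : a ∈ S)
    (hbound : ∀ j ∈ S, j ≤ a) : S.filter (fun b => b < a) = S.erase a := by
  ext x
  simp only [Finset.mem_filter, Finset.mem_erase]
  constructor
  · rintro ⟨hx, hlt⟩
    exact ⟨ne_of_lt hlt, hx⟩
  · rintro ⟨hne, hx⟩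
    exact ⟨hx, lt_of_le_of_ne (hbound x hx) hne⟩

lemma neg_one_pow_smul_smul {M : Type*} [AddCommMonoid M] [Module k M]
    (n : ℕ) (x : M) : ((-1 : k) ^ n) • ((-1 : k) ^ n) • x = x := by
  rw [smul_smul, ← pow_add, Even.neg_one_pow ⟨n, rfl⟩, one_smul]

lemma P_single_U {S : Finset (Fin N)} {e : Fin N → ℕ} (hgm : ¬ badXi e)
    (hT : (piv ((S, e) : WMon N)).Nonempty)
    (haS : (piv ((S, e) : WMon N)).max' hT ∈ S)
    (hnc : ¬ isCocycleMon (S, e)) :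
    weylP k N (Finsupp.single (⟨(S, e), hgm⟩ : GoodMon N) 1) = 0 := by
  set m : GoodMon N := ⟨(S, e), hgm⟩ with hm
  set a := (piv ((S, e) : WMon N)).max' hT with ha
  have hbound : ∀ j ∈ piv ((S, e) : WMon N), j ≤ a := fun j hj => Finset.le_max' _ j hj
  have hSbound : ∀ j ∈ S, j ≤ a := fun j hj => hbound j (mem_piv.2 (Or.inl hj))
  have hsupp : ∀ j : Fin N, a < j → e j = 0 := by
    intro j hj
    by_contra hc
    exact absurd (hbound j (mem_piv.2 (Or.inr hc))) (not_le.mpr hj)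
  have htot : ∑ j, e j ≤ (a : ℕ) := U_total hgm hT haS hnc
  -- the update at the pivot is good
  have hgood : ¬ badXi (Function.update e a (e a + 1)) := by
    rw [good_iff]
    intro K hK1 hKN
    by_cases hlt : (a : ℕ) < K
    · have h1 : psum e K = ∑ j, e j :=
        psum_eq_total fun j hj => hsupp j (by exact_mod_cast by omega)
      have h2 := psum_update_lt e (n := e a + 1) hlt
      omega
    · rw [psum_update_ge _ hlt]
      exact good_iff.mp hgm K hK1 hKN
  -- h kills the monomial itself
  have hH : weylHMon k m = 0 :=
    weylHMon_zero k hgm (Finset.max'_mem _ _) hbound haS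
  -- h ∘ d reproduces the monomial
  have hHD : weylH k N (weylDMon k m) = Finsupp.single m 1 := by
    rw [weylDMon, map_sum]
    rw [Finset.sum_eq_single_of_mem a haS]
    · -- the pivot term
      rw [map_smul, dif_pos hgood, weylH_single]
      have hpiv : piv ((S.erase a, Function.update e a (e a + 1)) : WMon N)
          = piv ((S, e) : WMon N) := piv_erase_update haS
      have hmem2 : a ∈ piv ((S.erase a, Function.update e a (e a + 1)) : WMon N) := by
        rw [hpiv]
        exact Finset.max'_mem _ _
      have hb2 : ∀ j ∈ piv ((S.erase a, Function.update e a (e a + 1)) : WMon N),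
          j ≤ a := by
        rw [hpiv]
        exact hbound
      have hgood2 : ¬ badXi (Function.update (Function.update e a (e a + 1)) a
          (Function.update e a (e a + 1) a - 1)) := by
        rw [update_add_sub]
        exact hgm
      rw [weylHMon_eq k hgood hmem2 hb2 (Finset.notMem_erase _ _) hgood2]
      have hkey : (⟨(insert a (S.erase a),
          Function.update (Function.update e a (e a + 1)) a
            (Function.update e a (e a + 1) a - 1)), hgood2⟩ : GoodMon N) = m := by
        apply Subtype.ext
        apply Prod.ext
        · exact Finset.insert_erase haS
        · exact update_add_sub e a
      rw [hkey, filter_lt_max haS hSbound]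
      exact neg_one_pow_smul_smul k _ _
    · -- non-pivot terms die
      intro b hb hba
      rw [map_smul]
      by_cases hg : ¬ badXi (Function.update e b (e b + 1))
      · rw [dif_pos hg, weylH_single]
        have hpiv : piv ((S.erase b, Function.update e b (e b + 1)) : WMon N)
            = piv ((S, e) : WMon N) := piv_erase_update hb
        have hmem2 : a ∈ piv ((S.erase b, Function.update e b (e b + 1)) : WMon N) := by
          rw [hpiv]
          exact Finset.max'_mem _ _
        have hb2 : ∀ j ∈ piv ((S.erase b, Function.update e b (e b + 1)) : WMon N),
            j ≤ a := by
          rw [hpiv]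
          exact hbound
        rw [weylHMon_zero k hg hmem2 hb2 (Finset.mem_erase.mpr ⟨Ne.symm hba, haS⟩)]
        simp
      · rw [dif_neg hg]
        simp
  rw [weylP_single, hH, hHD]
  simp

end WeylAux
namespace WeylAux
set_option linter.unusedSectionVars false

lemma psum_le_total (e : Fin N → ℕ) (K : ℕ) : psum e K ≤ ∑ j, e j :=
  Finset.sum_le_sum_of_subset (Finset.filter_subset _ _)

lemma psum_mono_K (e : Fin N → ℕ) {K K' : ℕ} (h : K ≤ K') : psum e K ≤ psum e K' := by
  apply Finset.sum_le_sum_of_subset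
  intro j hj
  simp only [Finset.mem_filter, Finset.mem_univ, true_and] at *
  omega

lemma update_cross {e : Fin N → ℕ} {a b : Fin N} (hab : a ≠ b) :
    Function.update (Function.update e a (e a - 1)) b
      (Function.update e a (e a - 1) b + 1)
    = Function.update (Function.update e b (e b + 1)) a
      (Function.update e b (e b + 1) a - 1) := by
  rw [Function.update_of_ne hab.symm, Function.update_of_ne hab]
  exact Function.update_comm hab _ _ e

lemma weylDMon_eq {S : Finset (Fin N)} {e : Fin N → ℕ} (hgm : ¬ badXi e) :
    weylDMon k (⟨(S, e), hgm⟩ : GoodMon N)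
      = ∑ b ∈ S, ((-1 : k) ^ ((S.filter (fun x => x < b)).card)) •
          (if h : ¬ badXi (Function.update e b (e b + 1)) then
            Finsupp.single (⟨(S.erase b, Function.update e b (e b + 1)), h⟩ : GoodMon N) 1
          else 0) :=
  rfl

lemma P_single_V {S : Finset (Fin N)} {e : Fin N → ℕ} (hgm : ¬ badXi e)
    (hT : (piv ((S, e) : WMon N)).Nonempty)
    (hanS : (piv ((S, e) : WMon N)).max' hT ∉ S) :
    weylP k N (Finsupp.single (⟨(S, e), hgm⟩ : GoodMon N) 1) ∈ critSpan k N := by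
  set m : GoodMon N := ⟨(S, e), hgm⟩ with hm
  set a := (piv ((S, e) : WMon N)).max' hT with ha
  have hapiv : a ∈ piv ((S, e) : WMon N) := Finset.max'_mem _ _
  have hbound : ∀ j ∈ piv ((S, e) : WMon N), j ≤ a := fun j hj => Finset.le_max' _ j hj
  have hea : e a ≠ 0 := by
    rcases mem_piv.1 hapiv with h | h
    · exact absurd h hanS
    · exact h
  have hea1 : 1 ≤ e a := Nat.one_le_iff_ne_zero.mpr hea
  have hSlt : ∀ j ∈ S, j < a := fun j hj =>
    lt_of_le_of_ne (hbound j (mem_piv.2 (Or.inl hj))) (fun hc => hanS (hc ▸ hj))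
  have hsupp : ∀ j : Fin N, a < j → e j = 0 := by
    intro j hj
    by_contra hc
    exact absurd (hbound j (mem_piv.2 (Or.inr hc))) (not_le.mpr hj)
  have hgme : ¬ badXi (Function.update e a (e a - 1)) := good_of_le (update_sub_le e a) hgm
  set u : GoodMon N := ⟨(insert a S, Function.update e a (e a - 1)), hgme⟩ with hu
  -- h on the monomial
  have hHmon : weylHMon k m = ((-1 : k) ^ S.card) • Finsupp.single u 1 :=
    weylHMon_eq k hgm hapiv hbound hanS hgme
  -- condition for the pivot term of d(u)
  have hconda : ¬ badXi (Function.update (Function.update e a (e a - 1)) a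
      (Function.update e a (e a - 1) a + 1)) := by
    rw [update_sub_add e a hea]
    exact hgm
  have hkey : (⟨((insert a S).erase a,
      Function.update (Function.update e a (e a - 1)) a
        (Function.update e a (e a - 1) a + 1)), hconda⟩ : GoodMon N) = m := by
    apply Subtype.ext
    apply Prod.ext
    · exact Finset.erase_insert hanS
    · exact update_sub_add e a hea
  have hfa : (insert a S).filter (fun x => x < a) = S := by
    ext x
    simp only [Finset.mem_filter, Finset.mem_insert]
    constructor
    · rintro ⟨rfl | hx, hlt⟩
      · exact absurd hlt (lt_irrefl _)
      · exact hx
    · intro hx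
      exact ⟨Or.inr hx, hSlt x hx⟩
  -- d ∘ h on the monomial
  have hDH : weylD k N (weylHMon k m) = Finsupp.single m 1 +
      ∑ b ∈ S, (((-1 : k) ^ S.card) * ((-1 : k) ^ ((S.filter (fun x => x < b)).card))) •
        (if h : ¬ badXi (Function.update (Function.update e a (e a - 1)) b
            (Function.update e a (e a - 1) b + 1)) then
          Finsupp.single (⟨((insert a S).erase b,
            Function.update (Function.update e a (e a - 1)) b
              (Function.update e a (e a - 1) b + 1)), h⟩ : GoodMon N) 1
        else 0) := by
    rw [hHmon, map_smul, weylD_single, weylDMon_eq, Finset.sum_insert hanS, smul_add]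
    congr 1
    · rw [hfa, dif_pos hconda, hkey]
      exact neg_one_pow_smul_smul k _ _
    · rw [Finset.smul_sum]
      refine Finset.sum_congr rfl fun b hb => ?_
      rw [smul_smul]
      have hfb : (insert a S).filter (fun x => x < b) = S.filter (fun x => x < b) := by
        rw [Finset.filter_insert, if_neg (not_lt.mpr (hSlt b hb).le)]
      rw [hfb]
  -- h ∘ d on the monomial
  have hHD : weylH k N (weylDMon k m) =
      ∑ b ∈ S, ((-1 : k) ^ ((S.filter (fun x => x < b)).card)) •
        (if h : ¬ badXi (Function.update e b (e b + 1)) then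
          ((-1 : k) ^ ((S.erase b).card)) •
            Finsupp.single (⟨(insert a (S.erase b),
              Function.update (Function.update e b (e b + 1)) a
                (Function.update e b (e b + 1) a - 1)),
              good_of_le (update_sub_le _ _) h⟩ : GoodMon N) 1
        else 0) := by
    rw [weylDMon_eq, map_sum]
    refine Finset.sum_congr rfl fun b hb => ?_
    rw [map_smul]
    congr 1
    by_cases hg2 : ¬ badXi (Function.update e b (e b + 1))
    · rw [dif_pos hg2, dif_pos hg2, weylH_single]
      have hpiv : piv ((S.erase b, Function.update e b (e b + 1)) : WMon N)
          = piv ((S, e) : WMon N) := piv_erase_update hb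
      have hmem2 : a ∈ piv ((S.erase b, Function.update e b (e b + 1)) : WMon N) := by
        rw [hpiv]
        exact hapiv
      have hb2 : ∀ j ∈ piv ((S.erase b, Function.update e b (e b + 1)) : WMon N), j ≤ a := by
        rw [hpiv]
        exact hbound
      exact weylHMon_eq k hg2 hmem2 hb2
        (fun hc => hanS (Finset.mem_of_mem_erase hc)) (good_of_le (update_sub_le _ _) hg2)
    · rw [dif_neg hg2, dif_neg hg2, map_zero]
  -- assemble
  rw [weylP_single, hDH, hHD]
  have habel : ∀ x y z : WModule k N, x - (x + y) - z = -(y + z) := by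
    intros x y z
    abel
  rw [habel, ← Finset.sum_add_distrib]
  refine neg_mem (Submodule.sum_mem _ fun b hb => ?_)
  have hab : a ≠ b := fun hc => hanS (hc ▸ hb)
  have hba : b < a := hSlt b hb
  have hcard : S.card = (S.erase b).card + 1 := by
    rw [Finset.card_erase_of_mem hb]
    have : 0 < S.card := Finset.card_pos.mpr ⟨b, hb⟩
    omega
  by_cases hg2 : ¬ badXi (Function.update e b (e b + 1))
  · -- both terms present: they cancel
    have hg1 : ¬ badXi (Function.update (Function.update e a (e a - 1)) b
        (Function.update e a (e a - 1) b + 1)) := by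
      rw [update_cross hab]
      exact good_of_le (update_sub_le _ _) hg2
    rw [dif_pos hg1, dif_pos hg2]
    have hw : (⟨((insert a S).erase b,
        Function.update (Function.update e a (e a - 1)) b
          (Function.update e a (e a - 1) b + 1)), hg1⟩ : GoodMon N)
        = ⟨(insert a (S.erase b),
            Function.update (Function.update e b (e b + 1)) a
              (Function.update e b (e b + 1) a - 1)),
            good_of_le (update_sub_le _ _) hg2⟩ := by
      apply Subtype.ext
      apply Prod.ext
      · exact Finset.erase_insert_of_ne hab
      · exact update_cross hab
    rw [hw, smul_smul, ← add_smul]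
    have hco : (-1 : k) ^ S.card * (-1 : k) ^ ((S.filter (fun x => x < b)).card)
        + (-1 : k) ^ ((S.filter (fun x => x < b)).card) * (-1 : k) ^ ((S.erase b).card)
        = 0 := by
      rw [hcard, pow_succ]
      ring
    rw [hco, zero_smul]
    exact zero_mem _
  · -- the d∘h term survives and is critical
    rw [dif_neg hg2, smul_zero, add_zero]
    by_cases hg1 : ¬ badXi (Function.update (Function.update e a (e a - 1)) b
        (Function.update e a (e a - 1) b + 1))
    · rw [dif_pos hg1]
      refine Submodule.smul_mem _ _ (single_mem_critSpan k ?_)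
      -- the leftover monomial is critical
      have hbad2 : badXi (Function.update e b (e b + 1)) := not_not.mp hg2
      obtain ⟨K, hK1, hKN, hKlt'⟩ := hbad2
      have hKlt : K < psum (Function.update e b (e b + 1)) K := hKlt'
      have hgK : psum e K ≤ K := good_iff.mp hgm K hK1 hKN
      have hbK : (b : ℕ) < K := by
        by_contra hcon
        rw [psum_update_ge _ hcon] at hKlt
        omega
      have h3 := psum_update_lt e (n := e b + 1) hbK
      have hpsK : psum e K = K := by omega
      have haK : (a : ℕ) < K := by
        by_contra hcon
        have h4 : psum (Function.update e a (e a - 1)) K = psum e K :=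
          psum_update_ge _ hcon
        have h5 := psum_update_lt (Function.update e a (e a - 1))
          (n := Function.update e a (e a - 1) b + 1) hbK
        have h6 : psum (Function.update (Function.update e a (e a - 1)) b
            (Function.update e a (e a - 1) b + 1)) K ≤ K := good_iff.mp hg1 K hK1 hKN
        omega
      have h8 : psum e ((a : ℕ) + 1) = ∑ j, e j :=
        psum_eq_total fun j hj => hsupp j (by exact_mod_cast by omega)
      have h9 : psum e ((a : ℕ) + 1) ≤ psum e K := psum_mono_K e (by omega)
      have h10 : psum e K ≤ ∑ j, e j := psum_le_total e K
      have hgA : psum e ((a : ℕ) + 1) ≤ (a : ℕ) + 1 := good_iff.mp hgm _ (by omega) a.isLt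
      have htote : ∑ j, e j = (a : ℕ) + 1 := by omega
      -- total of the new exponent vector
      have ht1 := psum_update_lt (Function.update e a (e a - 1))
        (n := Function.update e a (e a - 1) b + 1) (K := N) b.isLt
      have ht2 := psum_update_lt e (n := e a - 1) (K := N) a.isLt
      have ht3 : psum e N = (a : ℕ) + 1 := by
        rw [psum_N]
        exact htote
      have htot2 : ∑ j, (Function.update (Function.update e a (e a - 1)) b
          (Function.update e a (e a - 1) b + 1)) j = (a : ℕ) + 1 := by
        rw [← psum_N]
        omega
      refine isCocycleMon_of (a := a) ?_ ?_ ?_ hg1 htot2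
      · exact Finset.mem_erase.mpr ⟨hab, Finset.mem_insert_self _ _⟩
      · intro j hj
        rcases Finset.mem_insert.mp (Finset.mem_of_mem_erase hj) with rfl | hjS
        · exact le_refl _
        · exact (hSlt j hjS).le
      · intro j hj
        rw [Function.update_of_ne (hba.trans hj).ne', Function.update_of_ne hj.ne']
        exact hsupp j hj
    · rw [dif_neg hg1, smul_zero]
      exact Submodule.zero_mem _

end WeylAux
namespace WeylAux
set_option linter.unusedSectionVars false

lemma sum_sum_antisym {α M : Type*} [DecidableEq α] [AddCommGroup M] (s : Finset α) (f : α → α → M)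
    (hf : ∀ a ∈ s, ∀ b ∈ s, a ≠ b → f a b = - f b a) :
    ∑ a ∈ s, ∑ b ∈ s.erase a, f a b = 0 := by
  induction s using Finset.induction_on with
  | empty => simp
  | @insert x s hx ih =>
    rw [Finset.sum_insert hx, Finset.erase_insert hx]
    have hstep : ∀ a ∈ s, ∑ b ∈ (insert x s).erase a, f a b
        = f a x + ∑ b ∈ s.erase a, f a b := by
      intro a ha
      have hax : x ≠ a := fun hc => hx (hc ▸ ha)
      rw [Finset.erase_insert_of_ne hax,
        Finset.sum_insert (fun hc => hx (Finset.mem_of_mem_erase hc))]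
    rw [Finset.sum_congr rfl hstep, Finset.sum_add_distrib]
    have h1 : ∑ a ∈ s, f a x = - ∑ b ∈ s, f x b := by
      rw [← Finset.sum_neg_distrib]
      refine Finset.sum_congr rfl fun a ha => ?_
      exact hf a (Finset.mem_insert_of_mem ha) x (Finset.mem_insert_self _ _)
        (fun hc => hx (hc ▸ ha))
    rw [h1, ih (fun a ha b hb hne => hf a (Finset.mem_insert_of_mem ha)
      b (Finset.mem_insert_of_mem hb) hne)]
    abel

lemma upd2_comm {e : Fin N → ℕ} {b b' : Fin N} (h : b ≠ b') :
    Function.update (Function.update e b (e b + 1)) b'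
      (Function.update e b (e b + 1) b' + 1)
    = Function.update (Function.update e b' (e b' + 1)) b
      (Function.update e b' (e b' + 1) b + 1) := by
  rw [Function.update_of_ne h.symm, Function.update_of_ne h]
  exact Function.update_comm h _ _ e

lemma upd2_le {e : Fin N → ℕ} (b b' : Fin N) (j : Fin N) :
    Function.update e b (e b + 1) j
      ≤ Function.update (Function.update e b (e b + 1)) b'
          (Function.update e b (e b + 1) b' + 1) j := by
  rcases eq_or_ne j b' with rfl | hj
  · rw [Function.update_self]
    omega
  · rw [Function.update_of_ne hj]

lemma sign_antisym {S : Finset (Fin N)} {b b' : Fin N} (hb : b ∈ S) (h : b < b') :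
    (-1 : k) ^ ((S.filter (fun x => x < b)).card)
        * (-1 : k) ^ (((S.erase b).filter (fun x => x < b')).card)
      = -((-1 : k) ^ ((S.filter (fun x => x < b')).card)
        * (-1 : k) ^ (((S.erase b').filter (fun x => x < b)).card)) := by
  have h1 : (S.erase b).filter (fun x => x < b') = (S.filter (fun x => x < b')).erase b := by
    rw [Finset.filter_erase]
  have h2 : (S.erase b').filter (fun x => x < b) = S.filter (fun x => x < b) := by
    rw [Finset.filter_erase, Finset.erase_eq_of_notMem]
    simp only [Finset.mem_filter, not_and]
    intro _
    exact not_lt.mpr h.le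
  have hbmem : b ∈ S.filter (fun x => x < b') := Finset.mem_filter.mpr ⟨hb, h⟩
  have h3 : (S.filter (fun x => x < b')).card
      = ((S.filter (fun x => x < b')).erase b).card + 1 := by
    rw [Finset.card_erase_of_mem hbmem]
    have : 0 < (S.filter (fun x => x < b')).card := Finset.card_pos.mpr ⟨b, hbmem⟩
    omega
  rw [h1, h2, h3, pow_succ]
  ring

lemma weylDD_single {S : Finset (Fin N)} {e : Fin N → ℕ} (hgm : ¬ badXi e) :
    weylD k N (weylDMon k (⟨(S, e), hgm⟩ : GoodMon N)) = 0 := by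
  rw [weylDMon_eq, map_sum]
  have hstep : ∀ b ∈ S,
      weylD k N (((-1 : k) ^ ((S.filter (fun x => x < b)).card)) •
        (if h : ¬ badXi (Function.update e b (e b + 1)) then
          Finsupp.single (⟨(S.erase b, Function.update e b (e b + 1)), h⟩ : GoodMon N) 1
        else 0))
      = ∑ b' ∈ S.erase b,
          (((-1 : k) ^ ((S.filter (fun x => x < b)).card))
            * ((-1 : k) ^ (((S.erase b).filter (fun x => x < b')).card))) •
          (if h : ¬ badXi (Function.update (Function.update e b (e b + 1)) b'
              (Function.update e b (e b + 1) b' + 1)) then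
            Finsupp.single (⟨((S.erase b).erase b',
              Function.update (Function.update e b (e b + 1)) b'
                (Function.update e b (e b + 1) b' + 1)), h⟩ : GoodMon N) 1
          else 0) := by
    intro b hb
    by_cases hg : ¬ badXi (Function.update e b (e b + 1))
    · rw [dif_pos hg, map_smul, weylD_single, weylDMon_eq, Finset.smul_sum]
      refine Finset.sum_congr rfl fun b' hb' => ?_
      rw [smul_smul]
    · rw [dif_neg hg, smul_zero, map_zero]
      refine (Finset.sum_eq_zero fun b' hb' => ?_).symm
      rw [dif_neg, smul_zero]
      intro hcon
      exact hg (good_of_le (upd2_le b b') hcon)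
  rw [Finset.sum_congr rfl hstep]
  apply sum_sum_antisym S
  intro b hb b' hb' hne
  -- antisymmetry of the double term
  have hset : (S.erase b).erase b' = (S.erase b').erase b := Finset.erase_right_comm
  have hupd := upd2_comm (e := e) hne
  have hdite : (if h : ¬ badXi (Function.update (Function.update e b (e b + 1)) b'
        (Function.update e b (e b + 1) b' + 1)) then
      Finsupp.single (⟨((S.erase b).erase b',
        Function.update (Function.update e b (e b + 1)) b'
          (Function.update e b (e b + 1) b' + 1)), h⟩ : GoodMon N) (1:k)
    else 0)
      = (if h : ¬ badXi (Function.update (Function.update e b' (e b' + 1)) b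
        (Function.update e b' (e b' + 1) b + 1)) then
      Finsupp.single (⟨((S.erase b').erase b,
        Function.update (Function.update e b' (e b' + 1)) b
          (Function.update e b' (e b' + 1) b + 1)), h⟩ : GoodMon N) (1:k)
    else 0) := by
    rw [hset] at *
    simp only [hupd]
  rw [hdite, ← neg_smul]
  congr 1
  rcases lt_or_gt_of_ne hne with hlt | hgt
  · exact sign_antisym k hb hlt
  · have := sign_antisym k (b := b') (b' := b) hb' hgt
    rw [this]
    ring

lemma weylDD (x : WModule k N) : weylD k N (weylD k N x) = 0 := by
  induction x using Finsupp.induction_linear with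
  | zero => simp
  | add f g hf hg => rw [map_add, map_add, hf, hg, add_zero]
  | single m c =>
    have hc : (Finsupp.single m c : WModule k N) = c • Finsupp.single m 1 := by
      rw [Finsupp.smul_single, smul_eq_mul, mul_one]
    rw [hc, map_smul, map_smul, weylD_single]
    obtain ⟨⟨S, e⟩, hgm⟩ := m
    rw [weylDD_single, smul_zero]

end WeylAux
namespace WeylAux
set_option linter.unusedSectionVars false

lemma crit_of_empty {S : Finset (Fin N)} {e : Fin N → ℕ}
    (h : ¬ (piv ((S, e) : WMon N)).Nonempty) : isCocycleMon ((S, e) : WMon N) := by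
  rw [Finset.not_nonempty_iff_eq_empty] at h
  have hS : S = ∅ := by
    rw [← Finset.subset_empty, ← h]
    intro j hj
    exact mem_piv.2 (Or.inl hj)
  have he : e = 0 := by
    funext j
    by_contra hc
    have : j ∈ piv ((S, e) : WMon N) := mem_piv.2 (Or.inr hc)
    rw [h] at this
    exact absurd this (Finset.notMem_empty j)
  exact Or.inl ⟨hS, he⟩

lemma P_single_mem (m : GoodMon N) : weylP k N (Finsupp.single m 1) ∈ critSpan k N := by
  obtain ⟨⟨S, e⟩, hgm⟩ := m
  by_cases hT : (piv ((S, e) : WMon N)).Nonempty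
  · by_cases haS : (piv ((S, e) : WMon N)).max' hT ∈ S
    · by_cases hnc : isCocycleMon ((S, e) : WMon N)
      · rw [crit_P_single k hnc]
        exact single_mem_critSpan k hnc
      · rw [P_single_U k hgm hT haS hnc]
        exact Submodule.zero_mem _
    · exact P_single_V k hgm hT haS
  · have hcrit : isCocycleMon ((S, e) : WMon N) := crit_of_empty hT
    rw [crit_P_single k hcrit]
    exact single_mem_critSpan k hcrit

lemma P_mem (x : WModule k N) : weylP k N x ∈ critSpan k N := by
  induction x using Finsupp.induction_linear with
  | zero => rw [map_zero]; exact Submodule.zero_mem _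
  | add f g hf hg => rw [map_add]; exact Submodule.add_mem _ hf hg
  | single m c =>
    have hc : (Finsupp.single m c : WModule k N) = c • Finsupp.single m 1 := by
      rw [Finsupp.smul_single, smul_eq_mul, mul_one]
    rw [hc, map_smul]
    exact Submodule.smul_mem _ _ (P_single_mem k m)

lemma P_fix {x : WModule k N} (hx : x ∈ critSpan k N) : weylP k N x = x := by
  induction hx using Submodule.span_induction with
  | mem y hy =>
    obtain ⟨c, rfl⟩ := hy
    exact crit_P_single k c.2
  | zero => exact map_zero _
  | add y z _ _ ihy ihz => rw [map_add, ihy, ihz]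
  | smul a y _ ihy => rw [map_smul, ihy]

lemma critSpan_le_ker : critSpan k N ≤ LinearMap.ker (weylD k N) := by
  rw [critSpan, Submodule.span_le]
  rintro y ⟨c, rfl⟩
  rw [SetLike.mem_coe, LinearMap.mem_ker, weylD_single]
  exact crit_d_zero k c.2

lemma P_comm (x : WModule k N) :
    weylP k N (weylD k N x) = weylD k N (weylP k N x) := by
  simp only [weylP, LinearMap.sub_apply, LinearMap.id_apply, LinearMap.comp_apply, map_sub]
  rw [weylDD k x, weylDD k (weylH k N x), map_zero]
  abel

/-- independence: a critical combination which is a boundary is zero -/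
lemma crit_boundary_zero {x : WModule k N} (hc : x ∈ critSpan k N)
    (hb : x ∈ LinearMap.range (weylD k N)) : x = 0 := by
  obtain ⟨y, rfl⟩ := hb
  have h1 : weylD k N y = weylP k N (weylD k N y) := (P_fix k hc).symm
  rw [h1, P_comm]
  exact LinearMap.mem_ker.mp (critSpan_le_ker k (P_mem k y))

/-- the defect `x - P x` is a boundary of `h x` when `x` is a cocycle -/
lemma sub_P_eq {x : WModule k N} (hx : weylD k N x = 0) :
    x - weylP k N x = weylD k N (weylH k N x) := by
  simp only [weylP, LinearMap.sub_apply, LinearMap.id_apply, LinearMap.comp_apply]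
  rw [hx, map_zero]
  abel

end WeylAux

/-- the classes of the monomials
`ζ_{α₁}⋯ζ_{α_s} ξ₁^{i₁}⋯ξ_{α_s}^{i_{α_s}}` with `i₁+⋯+i_k ≤ k` for `k ≤ α_s` and
`i₁+⋯+i_{α_s} = α_s`, together with the class of `1`, form a basis of the
cohomology of `(R/I, d = Σ ξᵢ ∂/∂ζᵢ)`. -/
theorem weyl_truncated_cohomology_basis (N : ℕ) :
    ∃ v : {m : GoodMon N // isCocycleMon m.1} → LinearMap.ker (weylD k N),
      (∀ x, ((v x : WModule k N)) = Finsupp.single x.1 (1 : k)) ∧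
      ∃ b : Module.Basis {m : GoodMon N // isCocycleMon m.1} k (WeylCohomology k N),
        ∀ x, b x = Submodule.Quotient.mk (v x) := by
  classical
  have hvmem : ∀ x : {m : GoodMon N // isCocycleMon m.1},
      (Finsupp.single x.1 (1 : k)) ∈ LinearMap.ker (weylD k N) :=
    fun x => WeylAux.critSpan_le_ker k (WeylAux.single_mem_critSpan k x.2)
  set v : {m : GoodMon N // isCocycleMon m.1} → LinearMap.ker (weylD k N) :=
    fun x => ⟨Finsupp.single x.1 1, hvmem x⟩ with hv
  set b' : {m : GoodMon N // isCocycleMon m.1} → WeylCohomology k N :=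
    fun x => Submodule.Quotient.mk (v x) with hb'
  -- independence of the singles in the module
  have li0 : LinearIndependent k
      (fun x : {m : GoodMon N // isCocycleMon m.1} =>
        Finsupp.single (x.1 : GoodMon N) (1 : k)) :=
    (Finsupp.basisSingleOne (R := k) (ι := GoodMon N)).linearIndependent.comp
      Subtype.val Subtype.val_injective
  -- linear independence in the quotient
  have li : LinearIndependent k b' := by
    rw [linearIndependent_iff']
    intro s g hsum i hi
    have h1 : (Submodule.Quotient.mk (∑ j ∈ s, g j • v j) : WeylCohomology k N) = 0 := by
      rw [← Submodule.mkQ_apply, map_sum]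
      simp only [map_smul, Submodule.mkQ_apply]
      exact hsum
    have h2 := (Submodule.Quotient.mk_eq_zero _).mp h1
    rw [Submodule.mem_comap] at h2
    have h3 : ((LinearMap.ker (weylD k N)).subtype (∑ j ∈ s, g j • v j))
        = ∑ j ∈ s, g j • Finsupp.single j.1 (1 : k) := by
      rw [map_sum]
      simp [hv]
    rw [h3] at h2
    have h5 : (∑ j ∈ s, g j • Finsupp.single j.1 (1 : k)) ∈ WeylAux.critSpan k N :=
      Submodule.sum_mem _ fun j _ =>
        Submodule.smul_mem _ _ (WeylAux.single_mem_critSpan k j.2)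
    have h6 : (∑ j ∈ s, g j • Finsupp.single j.1 (1 : k)) = 0 :=
      WeylAux.crit_boundary_zero k h5 h2.1
    exact linearIndependent_iff'.mp li0 s g h6 i hi
  -- spanning
  have hspan : ⊤ ≤ Submodule.span k (Set.range b') := by
    intro z _
    obtain ⟨⟨x, hx⟩, rfl⟩ := Submodule.Quotient.mk_surjective _ z
    have hdx : weylD k N x = 0 := LinearMap.mem_ker.mp hx
    have hPmem : WeylAux.weylP k N x ∈ WeylAux.critSpan k N := WeylAux.P_mem k x
    have hPker : WeylAux.weylP k N x ∈ LinearMap.ker (weylD k N) :=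
      WeylAux.critSpan_le_ker k hPmem
    have hdiff : (⟨x, hx⟩ : LinearMap.ker (weylD k N))
        - ⟨WeylAux.weylP k N x, hPker⟩ ∈
          (LinearMap.range (weylD k N) ⊓ LinearMap.ker (weylD k N)).comap
            (LinearMap.ker (weylD k N)).subtype := by
      rw [Submodule.mem_comap]
      refine Submodule.mem_inf.mpr ⟨?_, ?_⟩
      · show x - WeylAux.weylP k N x ∈ LinearMap.range (weylD k N)
        rw [WeylAux.sub_P_eq k hdx]
        exact ⟨WeylAux.weylH k N x, rfl⟩
      · exact sub_mem hx hPker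
    have hquot : (Submodule.Quotient.mk (⟨x, hx⟩ : LinearMap.ker (weylD k N))
        : WeylCohomology k N) = Submodule.Quotient.mk ⟨WeylAux.weylP k N x, hPker⟩ :=
      (Submodule.Quotient.eq _).mpr hdiff
    have hPm2 := hPmem
    rw [WeylAux.critSpan, Finsupp.mem_span_range_iff_exists_finsupp] at hPm2
    obtain ⟨c, hc⟩ := hPm2
    have hlift : (⟨WeylAux.weylP k N x, hPker⟩ : LinearMap.ker (weylD k N))
        = c.sum fun i a => a • v i := by
      apply Subtype.ext
      show WeylAux.weylP k N x
        = (LinearMap.ker (weylD k N)).subtype (c.sum fun i a => a • v i)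
      rw [map_finsuppSum]
      simp only [map_smul, Submodule.coe_subtype, hv]
      exact hc.symm
    show (Submodule.Quotient.mk (⟨x, hx⟩ : LinearMap.ker (weylD k N)) : WeylCohomology k N)
      ∈ Submodule.span k (Set.range b')
    rw [hquot, hlift, ← Submodule.mkQ_apply, map_finsuppSum]
    refine Submodule.finsuppSum_mem _ _ _ _ fun i _ => ?_
    rw [map_smul]
    exact Submodule.smul_mem _ _ (Submodule.subset_span ⟨i, rfl⟩)
  exact ⟨v, fun x => rfl, Module.Basis.mk li hspan, fun x => Module.Basis.mk_apply li hspan x⟩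
end
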